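/- Let a ≥ 0 and i ≥ 1 be integers, and let x ≥ i−1 be the unique real number with a = C(x, i). Then a^⟨i⟩ ≤ C(x+1, i+1), where a^⟨i⟩ = Σ_{j=1}^{i} C(a_j+1, j+1) with a = Σ_{j=1}^{i} C(a_j, j) the i-th binomial representation of a. -/

import Mathlib

/-- Generalized binomial coefficient `C(x, i) = x(x−1)⋯(x−i+1)/i!` for real `x`. -/
noncomputable def binomR (x : ℝ) (i : ℕ) : ℝ :=
  (∏ j ∈ Finset.range i, (x - j)) / (Nat.factorial i)

namespace MacaulayAux

open Finset

private lemma div_le_div_right' {a b c : ℝ} (h : a ≤ b) (hc : 0 < c) : a / c ≤ b / c := by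
  apply div_le_div_of_nonneg_right h hc.le

lemma binomR_nat (n k : ℕ) : binomR n k = Nat.choose n k := by
  unfold binomR
  rcases le_or_gt k n with h | h
  · have hprod : ∏ j ∈ range k, ((n:ℝ) - j) = (Nat.descFactorial n k : ℝ) := by
      rw [Nat.descFactorial_eq_prod_range, Nat.cast_prod]
      refine Finset.prod_congr rfl fun j hj => ?_
      have hj' : j ≤ n := le_trans (le_of_lt (mem_range.mp hj)) h
      rw [Nat.cast_sub hj']
    rw [hprod, Nat.descFactorial_eq_factorial_mul_choose]
    push_cast
    rw [mul_comm, mul_div_assoc, div_self (by exact_mod_cast (Nat.factorial_pos k).ne'), mul_one]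
  · have h0 : ∏ j ∈ range k, ((n:ℝ) - j) = 0 :=
      Finset.prod_eq_zero (mem_range.mpr h) (by simp)
    rw [h0, Nat.choose_eq_zero_iff.mpr h]
    simp

lemma binomR_succ (x : ℝ) (k : ℕ) :
    binomR x (k+1) = binomR x k * (x - k) / (k+1) := by
  unfold binomR
  rw [Finset.prod_range_succ, Nat.factorial_succ]
  push_cast
  rw [div_mul_eq_mul_div, div_div, mul_comm ((k:ℝ)+1)]

lemma binomR_pascal (x : ℝ) (k : ℕ) :
    binomR (x+1) (k+1) = binomR x k + binomR x (k+1) := by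
  unfold binomR
  rw [Finset.prod_range_succ' (fun j => (x + 1 - (j:ℝ))), Finset.prod_range_succ]
  have e : ∀ j ∈ range k, (x + 1 - ((j:ℕ)+1 : ℕ)) = x - j := by
    intro j hj; push_cast; ring
  rw [Finset.prod_congr rfl e, Nat.factorial_succ]
  have h1 : (Nat.factorial k : ℝ) ≠ 0 := by exact_mod_cast (Nat.factorial_pos k).ne'
  have h2 : ((k:ℝ)+1) ≠ 0 := by positivity
  push_cast
  field_simp
  ring

lemma binomR_nonneg (k : ℕ) {x : ℝ} (hx : (k:ℝ) - 1 ≤ x) : 0 ≤ binomR x k := by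
  unfold binomR
  apply div_nonneg _ (by positivity)
  apply Finset.prod_nonneg
  intro j hj
  have : (j:ℝ) + 1 ≤ (k:ℝ) := by exact_mod_cast mem_range.mp hj
  linarith

lemma binomR_mono (k : ℕ) {x y : ℝ} (hx : (k:ℝ) - 1 ≤ x) (hxy : x ≤ y) :
    binomR x k ≤ binomR y k := by
  unfold binomR
  have hj : ∀ j ∈ range k, (j:ℝ) ≤ (k:ℝ) - 1 := by
    intro j hjm
    have : (j:ℝ) + 1 ≤ (k:ℝ) := by exact_mod_cast mem_range.mp hjm
    linarith
  have hle : ∏ j ∈ range k, (x - (j:ℝ)) ≤ ∏ j ∈ range k, (y - (j:ℝ)) := by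
    apply Finset.prod_le_prod
    · intro j hjm; linarith [hj j hjm]
    · intro j hjm; linarith
  exact div_le_div_right' hle (by positivity)

lemma binomR_lt (k : ℕ) {x y : ℝ} (hx : (k:ℝ) ≤ x) (hxy : x < y) :
    binomR x (k+1) < binomR y (k+1) := by
  unfold binomR
  apply div_lt_div_of_pos_right ?_ (by positivity)
  have hj : ∀ j ∈ range (k+1), (j:ℝ) ≤ (k:ℝ) := by
    intro j hjm
    have : j ≤ k := Nat.lt_succ_iff.mp (mem_range.mp hjm)
    exact_mod_cast this
  rcases eq_or_lt_of_le hx with he | hlt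
  · have h0 : ∏ j ∈ range (k+1), (x - (j:ℝ)) = 0 :=
      Finset.prod_eq_zero (mem_range.mpr (Nat.lt_succ_self k)) (by rw [← he]; ring)
    rw [h0]
    apply Finset.prod_pos
    intro j hjm
    have := hj j hjm
    linarith
  · apply Finset.prod_lt_prod_of_nonempty
    · intro j hjm
      have := hj j hjm
      linarith
    · intro j hjm
      linarith
    · exact Finset.nonempty_range_add_one


/-- Weierstrass-type product bound: `∏ (1 - t aⱼ) ≤ 1 - t (1 - ∏(1 - aⱼ))` for `t, aⱼ ∈ [0,1]`. -/
lemma prod_lin_le (n : ℕ) (g : ℕ → ℝ) (t : ℝ) (ht0 : 0 ≤ t) (ht1 : t ≤ 1)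
    (hg : ∀ j ∈ Finset.range n, 0 ≤ g j ∧ g j ≤ 1) :
    ∏ j ∈ Finset.range n, (1 - t * g j) ≤
      1 - t * (1 - ∏ j ∈ Finset.range n, (1 - g j)) := by
  induction n with
  | zero => simp
  | succ n ih =>
    have hg' : ∀ j ∈ Finset.range n, 0 ≤ g j ∧ g j ≤ 1 := fun j hj =>
      hg j (mem_range.mpr (lt_trans (mem_range.mp hj) (Nat.lt_succ_self n)))
    have hgn := hg n (mem_range.mpr (Nat.lt_succ_self n))
    have ihn := ih hg'
    rw [Finset.prod_range_succ, Finset.prod_range_succ]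
    set A := ∏ j ∈ Finset.range n, (1 - t * g j) with hA
    set B := ∏ j ∈ Finset.range n, (1 - g j) with hB
    have hB0 : 0 ≤ B := Finset.prod_nonneg fun j hj => by linarith [(hg' j hj).2]
    have hB1 : B ≤ 1 := Finset.prod_le_one (fun j hj => by linarith [(hg' j hj).2])
      (fun j hj => by linarith [(hg' j hj).1])
    have hfac : 0 ≤ 1 - t * g n := by nlinarith [hgn.1, hgn.2]
    have step1 : A * (1 - t * g n) ≤ (1 - t * (1 - B)) * (1 - t * g n) :=
      mul_le_mul_of_nonneg_right ihn hfac
    have step2 : (1 - t * (1 - B)) * (1 - t * g n) ≤ 1 - t * (1 - B * (1 - g n)) := by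
      nlinarith [mul_nonneg (mul_nonneg (mul_nonneg ht0 hgn.1) (by linarith : (0:ℝ) ≤ 1 - B)) (by linarith : (0:ℝ) ≤ 1 - t)]
    linarith

/-- telescoping: `∏_{j<n} (1 - 1/(m-j)) = (m-n)/m` -/
lemma prod_tel (n : ℕ) (m : ℝ) (hm0 : 0 < m) (h : (n:ℝ) - 1 < m) :
    ∏ j ∈ Finset.range n, (1 - 1/(m - j)) = (m - n)/m := by
  induction n with
  | zero => simp [div_self hm0.ne']
  | succ n ih =>
    have hn : (n:ℝ) < m := by push_cast at h; linarith
    have hmn : m - (n:ℝ) ≠ 0 := by linarith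
    rw [Finset.prod_range_succ, ih (by linarith)]
    push_cast
    field_simp
    ring

/-- `∏ (m - t - j) ≤ (∏ (m - j)) (1 - n t/m)` for `t ∈ [0,1]`, `m ≥ n`. -/
lemma prod_shift_le (n : ℕ) (m t : ℝ) (hm : (n:ℝ) ≤ m) (ht0 : 0 ≤ t) (ht1 : t ≤ 1) :
    ∏ j ∈ Finset.range n, (m - t - j) ≤
      (∏ j ∈ Finset.range n, (m - j)) * (1 - n * t / m) := by
  rcases Nat.eq_zero_or_pos n with rfl | hn
  · simp
  have hm0 : (0:ℝ) < m := lt_of_lt_of_le (by exact_mod_cast hn) hm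
  have hmj : ∀ j ∈ Finset.range n, (1:ℝ) ≤ m - j := by
    intro j hj
    have : (j:ℝ) + 1 ≤ (n:ℝ) := by exact_mod_cast mem_range.mp hj
    linarith
  have hfactor : ∀ j ∈ Finset.range n, m - t - j = (m - j) * (1 - t * (1/(m - j))) := by
    intro j hj
    have h1 : m - (j:ℝ) ≠ 0 := by linarith [hmj j hj]
    field_simp
    ring
  rw [Finset.prod_congr rfl hfactor, Finset.prod_mul_distrib]
  apply mul_le_mul_of_nonneg_left ?_ (Finset.prod_nonneg fun j hj => by linarith [hmj j hj])
  have hgj : ∀ j ∈ Finset.range n, 0 ≤ 1/(m - j) ∧ 1/(m - j) ≤ 1 := by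
    intro j hj
    constructor
    · exact div_nonneg zero_le_one (by linarith [hmj j hj])
    · rw [div_le_one (by linarith [hmj j hj])]
      linarith [hmj j hj]
  have hPL := prod_lin_le n (fun j => 1/(m - j)) t ht0 ht1 hgj
  have hTL : ∏ j ∈ Finset.range n, (1 - 1/(m - j)) = (m - n)/m := by
    apply prod_tel n m hm0
    linarith
  rw [hTL] at hPL
  calc ∏ j ∈ Finset.range n, (1 - t * (1/(m - j))) ≤ 1 - t * (1 - (m - n)/m) := hPL
    _ = 1 - n * t / m := by field_simp; ring

set_option maxHeartbeats 1000000 in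
/-- Core analytic inequality. -/
lemma core (i : ℕ) (m u x : ℝ) (him : (i:ℝ) + 1 ≤ m) (hmx : m ≤ x) (hxm : x ≤ m + 1)
    (hui : (i:ℝ) ≤ u) (huy : u ≤ x - 1)
    (hE : binomR x (i+1) = binomR m (i+1) + binomR u i) :
    binomR m (i+2) + binomR u (i+1) ≤ binomR x (i+2) := by
  have hi0 : (0:ℝ) ≤ (i:ℝ) := Nat.cast_nonneg i
  have hm0 : (0:ℝ) < m := by linarith
  have ht0 : (0:ℝ) ≤ m - x + 1 := by linarith
  have ht1 : m - x + 1 ≤ 1 := by linarith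
  have hQ0 : 0 ≤ binomR m (i+1) := binomR_nonneg _ (by push_cast; linarith)
  have hS0 : 0 ≤ binomR u i := binomR_nonneg _ (by push_cast; linarith)
  -- P1 : binomR (x-1) (i+1) ≤ binomR m (i+1) * (1 - (i+1) (m-x+1)/m)
  have hP1 : binomR (x-1) (i+1) ≤ binomR m (i+1) * (1 - ((i:ℝ)+1) * (m - x + 1) / m) := by
    unfold binomR
    rw [div_mul_eq_mul_div]
    apply div_le_div_right' ?_ (by positivity)
    have h := prod_shift_le (i+1) m (m - x + 1) (by push_cast; linarith) ht0 ht1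
    have he : ∏ j ∈ Finset.range (i+1), (x - 1 - (j:ℝ)) =
        ∏ j ∈ Finset.range (i+1), (m - (m - x + 1) - j) := by
      apply Finset.prod_congr rfl; intro j _; ring_nf
    rw [he]
    calc ∏ j ∈ Finset.range (i+1), (m - (m - x + 1) - j)
        ≤ (∏ j ∈ Finset.range (i+1), (m - j)) * (1 - (i+1:ℕ) * (m - x + 1) / m) := h
      _ = (∏ j ∈ Finset.range (i+1), (m - j)) * (1 - ((i:ℝ)+1) * (m - x + 1) / m) := by
          push_cast; ring
  have hx0 : (0:ℝ) ≤ x := by linarith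
  have inner : x * (1 - ((i:ℝ)+1) * (m - x + 1) / m) ≤ x - ((i:ℝ)+1) * (m - x + 1) := by
    have hnn : 0 ≤ ((i:ℝ)+1) * (m - x + 1) * (x - m) :=
      mul_nonneg (mul_nonneg (by linarith) ht0) (by linarith)
    have hdiv : 0 ≤ ((i:ℝ)+1) * (m - x + 1) * (x - m) / m := div_nonneg hnn hm0.le
    have idy : x - ((i:ℝ)+1) * (m - x + 1) - x * (1 - ((i:ℝ)+1) * (m - x + 1) / m)
        = ((i:ℝ)+1) * (m - x + 1) * (x - m) / m := by
      field_simp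
      ring
    linarith
  have hstar : x * binomR (x-1) (i+1) ≤ binomR m (i+1) * (x - ((i:ℝ)+1) * (m - x + 1)) := by
    calc x * binomR (x-1) (i+1) ≤ x * (binomR m (i+1) * (1 - ((i:ℝ)+1) * (m - x + 1) / m)) :=
          mul_le_mul_of_nonneg_left hP1 hx0
      _ = binomR m (i+1) * (x * (1 - ((i:ℝ)+1) * (m - x + 1) / m)) := by ring
      _ ≤ binomR m (i+1) * (x - ((i:ℝ)+1) * (m - x + 1)) :=
          mul_le_mul_of_nonneg_left inner hQ0
  have hPas : binomR x (i+1) = binomR (x-1) i + binomR (x-1) (i+1) := by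
    have h := binomR_pascal (x-1) i
    rwa [sub_add_cancel] at h
  have hsy : binomR (x-1) i * (x - 1 - (i:ℝ)) = ((i:ℝ)+1) * binomR (x-1) (i+1) := by
    rw [binomR_succ (x-1) i]
    field_simp
  have e1 : binomR u i = binomR (x-1) i + binomR (x-1) (i+1) - binomR m (i+1) := by
    linarith [hE, hPas]
  have e3 : binomR u i * (x - 1 - (i:ℝ)) =
      x * binomR (x-1) (i+1) - binomR m (i+1) * (x - 1 - (i:ℝ)) := by
    linear_combination (x - 1 - (i:ℝ)) * e1 + hsy
  have hdag : binomR u i * (x - 1 - (i:ℝ)) ≤ ((i:ℝ)+1) * binomR m (i+1) * (x - m) := by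
    nlinarith [hstar, e3]
  have hfin : binomR u i * (u - (i:ℝ)) ≤ binomR u i * (x - 1 - (i:ℝ)) :=
    mul_le_mul_of_nonneg_left (by linarith) hS0
  have hi1 : (0:ℝ) < (i:ℝ) + 1 := by linarith
  have hi2 : (0:ℝ) < (i:ℝ) + 2 := by linarith
  have E1 : binomR x (i+2) = (binomR m (i+1) + binomR u i) * (x - ((i:ℝ)+1))/((i:ℝ)+2) := by
    have h := binomR_succ x (i+1)
    rw [hE] at h
    push_cast at h
    convert h using 2 <;> push_cast <;> ring
  have E2 : binomR m (i+2) = binomR m (i+1) * (m - ((i:ℝ)+1))/((i:ℝ)+2) := by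
    have h := binomR_succ m (i+1)
    push_cast at h
    convert h using 2 <;> push_cast <;> ring
  have E3 : binomR u (i+1) = binomR u i * (u - (i:ℝ))/((i:ℝ)+1) := binomR_succ u i
  have h5 : binomR m (i+1) * (m - ((i:ℝ)+1)) * ((i:ℝ)+1) +
      binomR u i * (u - (i:ℝ)) * ((i:ℝ)+2) ≤
      (binomR m (i+1) + binomR u i) * (x - ((i:ℝ)+1)) * ((i:ℝ)+1) := by
    nlinarith [mul_le_mul_of_nonneg_right hfin hi2.le, hdag]
  rw [E1, E2, E3, div_add_div _ _ hi2.ne' hi1.ne', div_le_div_iff₀ (by positivity) hi2]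
  nlinarith [mul_le_mul_of_nonneg_left h5 hi2.le]


lemma binomR_continuous (k : ℕ) : Continuous (fun x : ℝ => binomR x k) := by
  unfold binomR
  apply Continuous.div_const
  exact continuous_finset_prod _ (fun j _ => (continuous_id.sub continuous_const))

lemma smono_add {n : ℕ} (f : Fin n → ℕ) (hf : StrictMono f) :
    ∀ (d : ℕ) (a b : Fin n), (a:ℕ) + d = (b:ℕ) → f a + d ≤ f b := by
  intro d
  induction d with
  | zero =>
    intro a b h
    have : a = b := Fin.ext (by omega)
    subst this
    simp
  | succ d ih =>
    intro a b h
    have hb' : (a:ℕ) + d < n := by omega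
    have h1 := ih a ⟨(a:ℕ)+d, hb'⟩ rfl
    have h2 : f ⟨(a:ℕ)+d, hb'⟩ < f b := hf (by simp [Fin.lt_def]; omega)
    omega

lemma hs (d : ℕ) : ∀ n, (∑ j ∈ Finset.range n, (d+2+j).choose d) ≤ (d+2+n).choose (d+1) := by
  intro n
  induction n with
  | zero => exact Nat.zero_le _
  | succ n ih =>
    rw [Finset.sum_range_succ]
    have hp := Nat.choose_succ_succ (d+2+n) d
    simp only [Nat.succ_eq_add_one] at hp
    have : d+2+(n+1) = (d+2+n)+1 := by omega
    rw [this]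
    omega

lemma sumA (i m : ℕ) (him : i ≤ m) :
    (∑ j ∈ Finset.range (i+1), (m - (i - j)).choose (j+2)) ≤ (m+1).choose (i+2) := by
  rcases lt_or_ge m (i+2) with h | h
  · rw [Finset.sum_eq_zero]
    · exact Nat.zero_le _
    · intro j hj
      exact Nat.choose_eq_zero_of_lt (by have := Finset.mem_range.mp hj; omega)
  · set d := m - (i+2) with hd
    have hm : m = d + i + 2 := by omega
    have he : ∀ j ∈ Finset.range (i+1), (m - (i - j)).choose (j+2) = (d+2+j).choose d := by
      intro j hj
      have hj' : j ≤ i := by have := Finset.mem_range.mp hj; omega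
      rw [show m - (i - j) = d + 2 + j by omega]
      have hsym := Nat.choose_symm (show j+2 ≤ d+2+j by omega)
      rw [show d+2+j - (j+2) = d by omega] at hsym
      exact hsym.symm
    rw [Finset.sum_congr rfl he]
    have h1 := hs d (i+1)
    have hsym2 := Nat.choose_symm (show d+1 ≤ m+1 by omega)
    rw [show m+1 - (d+1) = i+2 by omega] at hsym2
    calc (∑ j ∈ Finset.range (i+1), (d+2+j).choose d)
        ≤ (d+2+(i+1)).choose (d+1) := h1
      _ = (m+1).choose (i+2) := by rw [show d+2+(i+1) = m+1 by omega]; exact hsym2.symm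

set_option maxHeartbeats 1000000 in
lemma key : ∀ (i a : ℕ) (f : Fin i → ℕ), StrictMono f → ∀ x : ℝ, (i:ℝ) ≤ x →
    a = (∑ j : Fin i, (f j).choose ((j:ℕ)+1)) → (a:ℝ) ≤ binomR x i →
    ((∑ j : Fin i, (f j).choose ((j:ℕ)+2) : ℕ) : ℝ) ≤ binomR x (i+1) := by
  intro i
  induction i with
  | zero =>
    intro a f hf x hx hrep hax
    simp only [Finset.univ_eq_empty, Finset.sum_empty, Nat.cast_zero]
    have h1 : binomR x 1 = x := by
      unfold binomR
      simp [Finset.prod_range_one, Nat.factorial]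
    rw [show (0:ℕ)+1 = 1 from rfl, h1]
    simpa using hx
  | succ i ih =>
    intro a f hf x hx hrep hax
    show ((∑ j : Fin (i+1), (f j).choose ((j:ℕ)+2) : ℕ) : ℝ) ≤ binomR x (i+2)
    set m := f (Fin.last i) with hmdef
    have hjle : ∀ j : Fin (i+1), f j + (i - (j:ℕ)) ≤ m := by
      intro j
      apply smono_add f hf (i - (j:ℕ)) j (Fin.last i)
      have := j.isLt
      simp only [Fin.val_last]
      omega
    have hjf : ∀ j : Fin (i+1), (j:ℕ) ≤ f j := by
      intro j
      have := smono_add f hf (j:ℕ) ⟨0, Nat.succ_pos i⟩ j (by simp)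
      omega
    have him : i ≤ m := by
      have := hjf (Fin.last i)
      simpa [Fin.val_last] using this
    have hdec : a = (∑ j : Fin i, (f j.castSucc).choose ((j:ℕ)+1)) + m.choose (i+1) := by
      rw [hrep, Fin.sum_univ_castSucc]
      simp [Fin.coe_castSucc, Fin.val_last, hmdef]
    set b := ∑ j : Fin i, (f j.castSucc).choose ((j:ℕ)+1) with hb
    have hgoal_dec : (∑ j : Fin (i+1), (f j).choose ((j:ℕ)+2))
        = (∑ j : Fin i, (f j.castSucc).choose ((j:ℕ)+2)) + m.choose (i+2) := by
      rw [Fin.sum_univ_castSucc]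
      simp [Fin.coe_castSucc, Fin.val_last, hmdef]
    have hxi : (i:ℝ) + 1 ≤ x := by push_cast at hx; linarith
    have hmux : (m:ℝ) ≤ x := by
      by_contra hcon
      push_neg at hcon
      have h1 : binomR x (i+1) < binomR (m:ℝ) (i+1) :=
        binomR_lt i (by push_cast; linarith) hcon
      rw [binomR_nat m (i+1)] at h1
      have h2 : (m.choose (i+1) : ℝ) ≤ (a:ℝ) := by
        have : m.choose (i+1) ≤ a := by omega
        exact_mod_cast this
      linarith
    rcases le_or_gt ((m:ℝ)+1) x with hA | hB
    · -- Case A : m + 1 ≤ x, pure combinatorics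
      have hcomb : (∑ j : Fin (i+1), (f j).choose ((j:ℕ)+2)) ≤ (m+1).choose (i+2) := by
        calc (∑ j : Fin (i+1), (f j).choose ((j:ℕ)+2))
            ≤ ∑ j : Fin (i+1), (m - (i - (j:ℕ))).choose ((j:ℕ)+2) := by
              apply Finset.sum_le_sum
              intro j _
              exact Nat.choose_le_choose _ (by have := hjle j; omega)
          _ = ∑ j ∈ Finset.range (i+1), (m - (i - j)).choose (j+2) :=
              Fin.sum_univ_eq_sum_range (fun j => (m - (i - j)).choose (j+2)) (i+1)
          _ ≤ (m+1).choose (i+2) := sumA i m him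
      calc ((∑ j : Fin (i+1), (f j).choose ((j:ℕ)+2) : ℕ) : ℝ)
          ≤ (((m+1).choose (i+2) : ℕ) : ℝ) := by exact_mod_cast hcomb
        _ = binomR ((m:ℝ)+1) (i+2) := by
            rw [← binomR_nat (m+1) (i+2)]
            norm_num
        _ ≤ binomR x (i+2) := by
            apply binomR_mono (i+2) ?_ hA
            push_cast
            have : (i:ℝ) ≤ (m:ℝ) := by exact_mod_cast him
            linarith
    · -- Case B : x < m + 1
      have him1 : i + 1 ≤ m := by
        have h1 : (i:ℝ) < (m:ℝ) := by linarith
        exact_mod_cast Nat.succ_le_of_lt (by exact_mod_cast h1)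
      have hcm : (i:ℝ) ≤ (m:ℝ) := by exact_mod_cast him
      have hcm1 : (i:ℝ) + 1 ≤ (m:ℝ) := by exact_mod_cast him1
      have hQeq : binomR (m:ℝ) (i+1) = (m.choose (i+1) : ℝ) := binomR_nat m (i+1)
      have hQx : binomR (m:ℝ) (i+1) ≤ binomR x (i+1) :=
        binomR_mono (i+1) (by push_cast; linarith) hmux
      set S : ℝ := binomR x (i+1) - (m.choose (i+1) : ℝ) with hSdef
      have hS0 : 0 ≤ S := by rw [hSdef, ← hQeq]; linarith
      have habr : (a:ℝ) = (b:ℝ) + (m.choose (i+1):ℝ) := by exact_mod_cast hdec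
      have hbS : (b:ℝ) ≤ S := by rw [hSdef]; linarith
      have hySi : S ≤ binomR (x-1) i := by
        have p : binomR x (i+1) = binomR (x-1) i + binomR (x-1) (i+1) := by
          have h := binomR_pascal (x-1) i
          rwa [sub_add_cancel] at h
        have q : binomR (x-1) (i+1) ≤ binomR (m:ℝ) (i+1) :=
          binomR_mono (i+1) (by push_cast; linarith) (by linarith)
        rw [hSdef, ← hQeq]
        linarith
      rcases lt_or_ge S 1 with hS1 | hS1
      · -- B1 : b = 0
        have hb0 : b = 0 := by
          have h1 : (b:ℝ) < 1 := lt_of_le_of_lt hbS hS1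
          have : b < 1 := by exact_mod_cast h1
          omega
        have hterm : ∀ j : Fin i, (f j.castSucc).choose ((j:ℕ)+2) = 0 := by
          intro j
          have hz : (f j.castSucc).choose ((j:ℕ)+1) = 0 :=
            Finset.sum_eq_zero_iff.mp (hb ▸ hb0) j (Finset.mem_univ j)
          have hlt : f j.castSucc < (j:ℕ)+1 := Nat.choose_eq_zero_iff.mp hz
          have hge : (j:ℕ) ≤ f j.castSucc := by
            have := hjf j.castSucc
            simpa [Fin.coe_castSucc] using this
          exact Nat.choose_eq_zero_of_lt (by omega)
        have hsum0 : (∑ j : Fin i, (f j.castSucc).choose ((j:ℕ)+2)) = 0 :=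
          Finset.sum_eq_zero (fun j _ => hterm j)
        rw [hgoal_dec, hsum0]
        simp only [Nat.zero_add, zero_add]
        rcases le_or_gt (i+2) m with hm2 | hm2
        · calc ((m.choose (i+2):ℕ):ℝ) = binomR (m:ℝ) (i+2) := (binomR_nat m (i+2)).symm
            _ ≤ binomR x (i+2) := binomR_mono (i+2) (by push_cast; linarith) hmux
        · rw [Nat.choose_eq_zero_of_lt hm2]
          push_cast
          exact binomR_nonneg (i+2) (by push_cast; linarith)
      · -- B2 : 1 ≤ S, use IVT and core inequality
        have hley : (i:ℝ) ≤ x - 1 := by linarith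
        obtain ⟨u, humem, huS⟩ : ∃ u ∈ Set.Icc ((i:ℝ)) (x-1), binomR u i = S := by
          have hcont : ContinuousOn (fun t : ℝ => binomR t i) (Set.Icc (i:ℝ) (x-1)) :=
            (binomR_continuous i).continuousOn
          have hmem : S ∈ Set.Icc (binomR ((i:ℝ)) i) (binomR (x-1) i) := by
            constructor
            · rw [binomR_nat i i, Nat.choose_self]
              exact_mod_cast hS1
            · exact hySi
          obtain ⟨u, hu, hue⟩ := intermediate_value_Icc hley hcont hmem
          exact ⟨u, hu, hue⟩
        have hIH := ih b (f ∘ Fin.castSucc) (hf.comp Fin.strictMono_castSucc) u humem.1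
          (by rw [hb]; rfl) (by rw [huS]; exact hbS)
        simp only [Function.comp] at hIH
        have hE : binomR x (i+1) = binomR (m:ℝ) (i+1) + binomR u i := by
          rw [huS, hSdef, hQeq]
          ring
        have hcore := core i (m:ℝ) u x (by push_cast at him1 ⊢; exact_mod_cast him1)
          hmux (by linarith) humem.1 humem.2 hE
        calc ((∑ j : Fin (i+1), (f j).choose ((j:ℕ)+2) : ℕ) : ℝ)
            = ((∑ j : Fin i, (f j.castSucc).choose ((j:ℕ)+2) : ℕ):ℝ) + (m.choose (i+2):ℝ) := by
              rw [hgoal_dec]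
              push_cast
              ring
          _ ≤ binomR u (i+1) + binomR (m:ℝ) (i+2) := by
              have h2 : (m.choose (i+2):ℝ) = binomR (m:ℝ) (i+2) := (binomR_nat m (i+2)).symm
              linarith [hIH]
          _ ≤ binomR x (i+2) := by linarith [hcore]


end MacaulayAux

/-- If `a = C(x, i)` with `x ≥ i−1`, then `a^⟨i⟩ ≤ C(x+1, i+1)`, where `a^⟨i⟩`
is computed from the `i`-th binomial representation of `a`. -/
theorem macaulay_bound (a i : ℕ) (hi : 1 ≤ i) (x : ℝ)
    (hx : (i : ℝ) - 1 ≤ x) (hax : (a : ℝ) = binomR x i)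
    (f : Fin i → ℕ) (hf : StrictMono f)
    (hrep : a = ∑ j : Fin i, Nat.choose (f j) ((j : ℕ) + 1)) :
    ((∑ j : Fin i, Nat.choose (f j + 1) ((j : ℕ) + 2) : ℕ) : ℝ) ≤
      binomR (x + 1) (i + 1) := by
  obtain ⟨k, rfl⟩ : ∃ k, i = k + 1 := ⟨i - 1, by omega⟩
  have hsum : (∑ j : Fin (k+1), (f j + 1).choose ((j:ℕ)+2))
      = a + (∑ j : Fin (k+1), (f j).choose ((j:ℕ)+2)) := by
    rw [hrep, ← Finset.sum_add_distrib]
    exact Finset.sum_congr rfl fun j _ => Nat.choose_succ_succ (f j) ((j:ℕ)+1)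
  rcases le_or_gt (((k+1:ℕ)):ℝ) x with hxg | hxl
  · -- main case
    have hkey := MacaulayAux.key (k+1) a f hf x hxg hrep (le_of_eq hax)
    have hPas : binomR (x+1) (k+1+1) = binomR x (k+1) + binomR x (k+1+1) :=
      MacaulayAux.binomR_pascal x (k+1)
    calc ((∑ j : Fin (k+1), (f j + 1).choose ((j:ℕ)+2) : ℕ) : ℝ)
        = (a:ℝ) + ((∑ j : Fin (k+1), (f j).choose ((j:ℕ)+2) : ℕ):ℝ) := by
          rw [hsum]; push_cast; ring
      _ ≤ binomR x (k+1) + binomR x (k+1+1) := add_le_add (le_of_eq hax) hkey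
      _ = binomR (x+1) (k+1+1) := hPas.symm
  · -- degenerate case: x < i, so a = 0 and both sides vanish
    have hxk : ((k:ℕ):ℝ) ≤ x := by push_cast at hx ⊢; linarith
    have h1 : binomR x (k+1) < 1 := by
      have h := MacaulayAux.binomR_lt k hxk hxl
      rwa [MacaulayAux.binomR_nat (k+1) (k+1), Nat.choose_self, Nat.cast_one] at h
    have ha0 : a = 0 := by
      have : (a:ℝ) < 1 := by rw [hax]; exact h1
      have : a < 1 := by exact_mod_cast this
      omega
    have hjf : ∀ j : Fin (k+1), (j:ℕ) ≤ f j := by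
      intro j
      have := MacaulayAux.smono_add f hf (j:ℕ) ⟨0, Nat.succ_pos k⟩ j (by simp)
      omega
    have hterm : ∀ j : Fin (k+1), (f j + 1).choose ((j:ℕ)+2) = 0 := by
      intro j
      have hz : (f j).choose ((j:ℕ)+1) = 0 :=
        Finset.sum_eq_zero_iff.mp (ha0 ▸ hrep.symm) j (Finset.mem_univ j)
      have hlt : f j < (j:ℕ)+1 := Nat.choose_eq_zero_iff.mp hz
      have hge := hjf j
      exact Nat.choose_eq_zero_of_lt (by omega)
    have hsum0 : (∑ j : Fin (k+1), (f j + 1).choose ((j:ℕ)+2)) = 0 :=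
      Finset.sum_eq_zero (fun j _ => hterm j)
    rw [hsum0]
    push_cast
    apply MacaulayAux.binomR_nonneg
    push_cast
    push_cast at hx
    linarith
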